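/- Let α: ℝ≥0 → ℝ≥0 be of class K (continuous, strictly increasing, α(0)=0) and χ: ℝ≥0 → ℝ≥0 be of class K∞ such that χ − id is also of class K∞. Then for all a, b ≥ 0, α(a+b) ≤ α(χ(a)) + α(χ((χ − id)⁻¹(b))). -/

import Mathlib

/-- A class K∞ function: continuous, strictly increasing, vanishing at 0, and unbounded. -/
def IsKInf (f : NNReal → NNReal) : Prop :=
  Continuous f ∧ StrictMono f ∧ f 0 = 0 ∧ Filter.Tendsto f Filter.atTop Filter.atTop

/-- A class K function: continuous, strictly increasing, vanishing at 0. -/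
def IsK (f : NNReal → NNReal) : Prop :=
  Continuous f ∧ StrictMono f ∧ f 0 = 0

theorem stmt1 (α χ : NNReal → NNReal) (hα : IsK α) (hχ : IsKInf χ)
    -- χ − id is of class K∞ (in particular id ≤ χ):
    (hle : ∀ s, s ≤ χ s) (hd : IsKInf (fun s => χ s - s))
    -- inverse of χ − id:
    (dInv : NNReal → NNReal)
    (hdInv1 : ∀ s, dInv (χ s - s) = s) (hdInv2 : ∀ s, χ (dInv s) - dInv s = s) :
    ∀ a b : NNReal, α (a + b) ≤ α (χ a) + α (χ (dInv b)) := by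
  intro a b
  have hαmono : Monotone α := hα.2.1.monotone
  rcases le_total a (dInv b) with h | h
  · have h1 : a + b ≤ χ (dInv b) := by
      have : dInv b + b = χ (dInv b) := by
        conv_lhs => rw [← hdInv2 b]
        rw [hdInv1]
        exact add_tsub_cancel_of_le (hle _)
      calc a + b ≤ dInv b + b := add_le_add_left h _
        _ = χ (dInv b) := this
    exact le_add_left (hαmono h1)
  · have h2 : b ≤ χ a - a := by
      have := hd.2.1.monotone h
      simpa [hdInv2 b] using this
    have h1 : a + b ≤ χ a := by
      calc a + b ≤ a + (χ a - a) := add_le_add_right h2 _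
        _ = χ a := add_tsub_cancel_of_le (hle a)
    exact le_add_right (hαmono h1)
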